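/- Let A be an n×n symmetric positive definite matrix with condition number κ_A = λₙ/λ₁. For every x in the unit simplex Ω, the spectral radius of the Hessian ∇²φ_A(x) = 4(Ax)(Ax)ᵀ/(xᵀAx)² − 2A/(xᵀAx) of φ_A(x) = −ln(xᵀAx) is strictly less than 4n κ_A². -/

import Mathlib

open Matrix

section helpers
variable {n : ℕ} {A : Matrix (Fin n) (Fin n) ℝ}

private lemma my_quad_eq (hA : A.IsHermitian) (y : Fin n → ℝ) :
    ∃ c : Fin n → ℝ, y ⬝ᵥ A *ᵥ y = ∑ i, hA.eigenvalues i * (c i)^2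
      ∧ y ⬝ᵥ y = ∑ i, (c i)^2 := by
  set U : Matrix (Fin n) (Fin n) ℝ := (hA.eigenvectorUnitary : Matrix (Fin n) (Fin n) ℝ) with hU
  have hUs : star U = Uᵀ := by
    rw [Matrix.star_eq_conjTranspose, Matrix.conjTranspose_eq_transpose_of_trivial]
  have hspec : A = U * Matrix.diagonal hA.eigenvalues * Uᵀ := by
    have h := hA.spectral_theorem
    rw [Unitary.conjStarAlgAut_apply, ← hU, hUs] at h
    exact h
  have hUU : U * Uᵀ = 1 := by
    rw [← hUs]; exact (Matrix.mem_unitaryGroup_iff).mp hA.eigenvectorUnitary.2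
  refine ⟨Uᵀ *ᵥ y, ?_, ?_⟩
  · conv_lhs => rw [hspec]
    rw [← Matrix.mulVec_mulVec, ← Matrix.mulVec_mulVec, Matrix.dotProduct_mulVec,
      ← Matrix.vecMul_transpose]
    simp only [dotProduct, Matrix.mulVec_diagonal, ← Matrix.vecMul_transpose,
      Matrix.transpose_transpose, Matrix.diagonal_transpose, Matrix.vecMul_diagonal]
    exact Finset.sum_congr rfl fun i _ => by ring
  · conv_lhs => rw [show y ⬝ᵥ y = y ⬝ᵥ (U * Uᵀ) *ᵥ y by rw [hUU]; simp]
    rw [← Matrix.mulVec_mulVec, Matrix.dotProduct_mulVec, ← Matrix.vecMul_transpose]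
    simp [dotProduct, sq]

private lemma my_quad_le (hA : A.IsHermitian) {b : ℝ} (hb : ∀ i, hA.eigenvalues i ≤ b)
    (y : Fin n → ℝ) : y ⬝ᵥ A *ᵥ y ≤ b * (y ⬝ᵥ y) := by
  obtain ⟨c, h1, h2⟩ := my_quad_eq hA y
  rw [h1, h2, Finset.mul_sum]
  exact Finset.sum_le_sum fun i _ => mul_le_mul_of_nonneg_right (hb i) (sq_nonneg _)

private lemma my_le_quad (hA : A.IsHermitian) {a : ℝ} (ha : ∀ i, a ≤ hA.eigenvalues i)
    (y : Fin n → ℝ) : a * (y ⬝ᵥ y) ≤ y ⬝ᵥ A *ᵥ y := by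
  obtain ⟨c, h1, h2⟩ := my_quad_eq hA y
  rw [h1, h2, Finset.mul_sum]
  exact Finset.sum_le_sum fun i _ => mul_le_mul_of_nonneg_right (ha i) (sq_nonneg _)

private lemma my_dot_symm (hA : A.IsHermitian) (u w : Fin n → ℝ) :
    u ⬝ᵥ A *ᵥ w = w ⬝ᵥ A *ᵥ u := by
  have hT : Aᵀ = A := by
    rw [← Matrix.conjTranspose_eq_transpose_of_trivial]; exact hA
  rw [Matrix.dotProduct_mulVec, ← Matrix.mulVec_transpose, hT, dotProduct_comm]

private lemma my_nonneg (hA : A.PosDef) (u : Fin n → ℝ) : 0 ≤ u ⬝ᵥ A *ᵥ u := by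
  have := hA.posSemidef.re_dotProduct_nonneg u
  simpa using this

private lemma my_cs (hA : A.PosDef) (x y : Fin n → ℝ) :
    (x ⬝ᵥ A *ᵥ y)^2 ≤ (x ⬝ᵥ A *ᵥ x) * (y ⬝ᵥ A *ᵥ y) := by
  have key : ∀ t : ℝ, 0 ≤ (y ⬝ᵥ A *ᵥ y) * (t * t) + (2 * (x ⬝ᵥ A *ᵥ y)) * t
      + (x ⬝ᵥ A *ᵥ x) := by
    intro t
    have h := my_nonneg hA (x + t • y)
    have hsym := my_dot_symm hA.isHermitian y x
    rw [Matrix.mulVec_add, Matrix.mulVec_smul, add_dotProduct,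
      smul_dotProduct, dotProduct_add, dotProduct_add,
      dotProduct_smul, dotProduct_smul, hsym] at h
    simp only [smul_eq_mul] at h
    nlinarith [h]
  have := discrim_le_zero key
  rw [discrim] at this
  nlinarith [this]

end helpers

/-- The Hessian of `φ_A(x) = -ln(xᵀAx)`. -/
noncomputable def hessPhi {n : ℕ} (A : Matrix (Fin n) (Fin n) ℝ) (x : Fin n → ℝ) :
    Matrix (Fin n) (Fin n) ℝ :=
  (4 / (x ⬝ᵥ A.mulVec x) ^ 2) • Matrix.vecMulVec (A.mulVec x) (A.mulVec x)
    - (2 / (x ⬝ᵥ A.mulVec x)) • A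

set_option maxHeartbeats 1600000 in
theorem hessPhi_spectral_radius_lt (n : ℕ) (A : Matrix (Fin n) (Fin n) ℝ)
    (hA : A.PosDef) (l1 ln κ : ℝ)
    (hmin : ∀ i, l1 ≤ hA.isHermitian.eigenvalues i)
    (hminmem : ∃ i, hA.isHermitian.eigenvalues i = l1)
    (hmax : ∀ i, hA.isHermitian.eigenvalues i ≤ ln)
    (hmaxmem : ∃ i, hA.isHermitian.eigenvalues i = ln)
    (hκ : κ = ln / l1) :
    ∀ x ∈ stdSimplex ℝ (Fin n), ∀ (hH : (hessPhi A x).IsHermitian),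
      ∀ i, |hH.eigenvalues i| < 4 * n * κ ^ 2 := by
  intro x hx hH i
  have hn : 0 < n := i.pos
  obtain ⟨j1, hj1⟩ := hminmem
  have hl1 : 0 < l1 := hj1 ▸ hA.eigenvalues_pos j1
  have hln : l1 ≤ ln := hj1 ▸ hmax j1
  have hlnpos : 0 < ln := lt_of_lt_of_le hl1 hln
  have hκ1 : 1 ≤ κ := by rw [hκ]; exact (one_le_div hl1).mpr hln
  have hκpos : 0 < κ := lt_of_lt_of_le one_pos hκ1
  have hxne : x ≠ 0 := by
    intro h
    have := hx.2
    rw [h] at this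
    simp at this
  set q := x ⬝ᵥ A *ᵥ x with hqdef
  have hq : 0 < q := by
    have := hA.re_dotProduct_pos hxne
    simpa [hqdef] using this
  have hxx : 1 ≤ (n : ℝ) * (x ⬝ᵥ x) := by
    have h1 : (∑ j, x j) ^ 2 ≤ (Finset.univ.card : ℝ) * ∑ j, x j ^ 2 :=
      sq_sum_le_card_mul_sum_sq
    rw [hx.2] at h1
    simpa [dotProduct, sq] using h1
  set X := x ⬝ᵥ x with hXdef
  -- eigenvector setup
  set y : Fin n → ℝ := ⇑(hH.eigenvectorBasis i) with hy
  set μ : ℝ := hH.eigenvalues i with hμ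
  have heig : hessPhi A x *ᵥ y = μ • y := by
    have := hH.mulVec_eigenvectorBasis i
    simpa using this
  have hyne : y ≠ 0 := by
    have h := hH.eigenvectorBasis.orthonormal.ne_zero i
    intro hc
    apply h
    ext j
    exact congrFun hc j
  have hY : 0 < y ⬝ᵥ y := by
    rcases (dotProduct_self_eq_zero (v := y)).not.mpr hyne with h
    have h0 : 0 ≤ y ⬝ᵥ y := Finset.sum_nonneg fun j _ => mul_self_nonneg _
    exact lt_of_le_of_ne h0 (Ne.symm h)
  set Y := y ⬝ᵥ y with hYdef
  set s := (A *ᵥ x) ⬝ᵥ y with hsdef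
  set r := y ⬝ᵥ A *ᵥ y with hrdef
  have hvmv : ∀ v : Fin n → ℝ, Matrix.vecMulVec v v *ᵥ y = (v ⬝ᵥ y) • v := by
    intro v
    ext j
    simp only [Matrix.mulVec, Matrix.vecMulVec_apply, dotProduct, Pi.smul_apply, smul_eq_mul,
      Finset.sum_mul, Finset.mul_sum]
    exact Finset.sum_congr rfl fun k _ => by ring
  have hquad : μ * Y = (4 / q^2) * s^2 - (2 / q) * r := by
    have h := congrArg (fun v => y ⬝ᵥ v) heig
    simp only [dotProduct_smul, smul_eq_mul] at h
    rw [hessPhi, Matrix.sub_mulVec, Matrix.smul_mulVec, Matrix.smul_mulVec,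
      hvmv _, dotProduct_sub, dotProduct_smul, dotProduct_smul,
      dotProduct_smul] at h
    rw [← h]
    simp only [smul_eq_mul]
    have hc : y ⬝ᵥ (A *ᵥ x) = s := dotProduct_comm _ _
    rw [hc]
    ring
  -- key identity without division
  have hqne : q ≠ 0 := ne_of_gt hq
  have hkey : μ * Y * q^2 = 4 * s^2 - 2 * q * r := by
    field_simp at hquad
    nlinarith [hquad]
  -- Cauchy-Schwarz : s^2 ≤ q * r
  have hcs : s^2 ≤ q * r := by
    have h := my_cs hA x y
    have hs' : s = x ⬝ᵥ A *ᵥ y := by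
      rw [hsdef, dotProduct_comm, my_dot_symm hA.isHermitian]
    rw [← hs'] at h
    exact h
  have hr0 : 0 ≤ r := my_nonneg hA y
  have hrY : r ≤ ln * Y := my_quad_le hA.isHermitian hmax y
  have hq2 : l1 * X ≤ q := by rw [hXdef]; exact my_le_quad hA.isHermitian hmin x
  -- make everything opaque for arithmetic
  clear_value q y μ Y s r X
  clear heig hvmv hy hyne hxne hx hqdef hrdef hsdef hYdef hXdef hquad hmin hmax hmaxmem hj1 y hμ hH hA A x j1
  have h3 : q * r ≤ q * (ln * Y) := mul_le_mul_of_nonneg_left hrY hq.le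
  have hub : μ * Y * q^2 ≤ 2 * ln * Y * q := by
    have h1 : 4 * s^2 ≤ 4 * (q * r) := by linarith
    linarith [hkey, h3]
  have hlb : -(2 * ln * Y * q) ≤ μ * Y * q^2 := by
    have h1 : 0 ≤ 4 * s^2 := by positivity
    linarith [hkey, h3]
  have hYq : 0 < Y * q := mul_pos hY hq
  have habsq : |μ| * q ≤ 2 * ln := by
    have hub2 : (μ * q) * Y ≤ (2 * ln) * Y :=
      le_of_mul_le_mul_right (by nlinarith [hub] : ((μ * q) * Y) * q ≤ ((2 * ln) * Y) * q) hq
    have hmu_le : μ * q ≤ 2 * ln := le_of_mul_le_mul_right hub2 hY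
    have hlb2 : (-(2 * ln)) * Y ≤ (μ * q) * Y :=
      le_of_mul_le_mul_right (by nlinarith [hlb] : ((-(2 * ln)) * Y) * q ≤ ((μ * q) * Y) * q) hq
    have hmu_ge : -(2 * ln) ≤ μ * q := le_of_mul_le_mul_right hlb2 hY
    rcases abs_cases μ with ⟨he, _⟩ | ⟨he, _⟩
    · rw [he]; linarith
    · rw [he]; linarith [hmu_ge]
  have hκl : κ * l1 = ln := by rw [hκ]; field_simp
  have hnq : l1 ≤ (n : ℝ) * q := by
    have hq' : l1 * X ≤ q := hq2
    have hn' : (0:ℝ) < (n : ℝ) := by exact_mod_cast hn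
    have hxxpos : 0 < X := by nlinarith [hxx, hn']
    nlinarith [hxx, hq', hn']
  have hfin : 2 * ln < 4 * (n : ℝ) * κ^2 * q := by
    have h2 : 4 * κ^2 * l1 ≤ 4 * κ^2 * ((n : ℝ) * q) :=
      mul_le_mul_of_nonneg_left hnq (by positivity)
    have h4 : κ * l1 * 1 ≤ κ * l1 * κ :=
      mul_le_mul_of_nonneg_left hκ1 (mul_pos hκpos hl1).le
    have h3' : 2 * ln < 4 * κ^2 * l1 := by nlinarith [h4, hκl, hlnpos]
    nlinarith [h2, h3']
  have hstep : |μ| * q < (4 * (n : ℝ) * κ^2) * q := by nlinarith [habsq, hfin]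
  have := lt_of_mul_lt_mul_right hstep hq.le
  linarith [this]
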